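/- For odd slope k ∈ [0,2N), adjacent parallel discrete lines on (ℤ/2Nℤ)² satisfy |C₁(L^{2N}_{l,k}) − C₁(L^{2N}_{l+1,k})| = 2, where C₁ counts points in the quadrant set P₁ = ([0,N)×[0,N)) ∪ ([N,2N)×[N,2N)). -/

import Mathlib

/-- The discrete line `L^{2N}_{l,k} = {(x,y) ∈ [0,2N)² : x + k·y ≡ l mod 2N}`,
as a finite set of lattice points. -/
def lineNat (N l k : ℕ) : Finset (ℕ × ℕ) :=
  (Finset.range (2 * N) ×ˢ Finset.range (2 * N)).filter
    (fun q => (q.1 + k * q.2) % (2 * N) = l % (2 * N))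

/-- Membership in the quadrant set `P₁ = ([0,N)×[0,N)) ∪ ([N,2N)×[N,2N))`. -/
def inP1 (N : ℕ) (q : ℕ × ℕ) : Prop :=
  (q.1 < N ∧ q.2 < N) ∨ (N ≤ q.1 ∧ N ≤ q.2)

instance (N : ℕ) : DecidablePred (inP1 N) := fun _ => by unfold inP1; infer_instance

/-- `C₁(L)`: the number of points of the line `L^{2N}_{l,k}` lying in `P₁`. -/
def C1 (N l k : ℕ) : ℕ := ((lineNat N l k).filter (inP1 N)).card


def Xf (N k l y : ℕ) : ℕ := (l + (2*N - k*y % (2*N))) % (2*N)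

lemma Xf_lt (N k l y : ℕ) (hN : 0 < N) : Xf N k l y < 2*N :=
  Nat.mod_lt _ (by omega)

lemma Xf_spec (N k l y : ℕ) (hN : 0 < N) :
    (Xf N k l y + k*y) % (2*N) = l % (2*N) := by
  unfold Xf
  rw [Nat.mod_add_mod]
  have hd := Nat.div_add_mod (k*y) (2*N)
  have hr : k*y % (2*N) ≤ k*y := Nat.mod_le _ _
  have hlt : k*y % (2*N) < 2*N := Nat.mod_lt _ (by omega)
  have : l + (2*N - k*y % (2*N)) + k*y = l + 2*N*(1 + k*y/(2*N)) := by
    rw [Nat.mul_add, Nat.mul_one]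
    generalize hQ : 2*N*(k*y/(2*N)) = Q at hd ⊢
    omega
  rw [this, Nat.add_mul_mod_self_left]

lemma Xf_unique (N k l y x : ℕ) (hN : 0 < N) (hx : x < 2*N)
    (h : (x + k*y) % (2*N) = l % (2*N)) : x = Xf N k l y := by
  have h2 := Xf_spec N k l y hN
  have : x % (2*N) = Xf N k l y % (2*N) := by
    have : (x + k*y) % (2*N) = (Xf N k l y + k*y) % (2*N) := by rw [h, h2]
    exact Nat.ModEq.add_right_cancel' _ this
  rwa [Nat.mod_eq_of_lt hx, Nat.mod_eq_of_lt (Xf_lt N k l y hN)] at this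


lemma line_eq (N l k : ℕ) (hN : 0 < N) :
    lineNat N l k = (Finset.range (2*N)).image (fun y => (Xf N k l y, y)) := by
  ext ⟨x, y⟩
  simp only [lineNat, Finset.mem_filter, Finset.mem_product, Finset.mem_range,
    Finset.mem_image, Prod.mk.injEq]
  constructor
  · rintro ⟨⟨hx, hy⟩, heq⟩
    exact ⟨y, hy, (Xf_unique N k l y x hN hx heq).symm, rfl⟩
  · rintro ⟨y', hy', hx, rfl⟩
    subst hx
    exact ⟨⟨Xf_lt N k l y' hN, hy'⟩, Xf_spec N k l y' hN⟩

lemma C1_eq (N l k : ℕ) (hN : 0 < N) :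
    C1 N l k = ((Finset.range (2*N)).filter (fun y => inP1 N (Xf N k l y, y))).card := by
  unfold C1
  rw [line_eq N l k hN, Finset.filter_image]
  rw [Finset.card_image_of_injective _ (fun a b h => (Prod.mk.injEq _ _ _ _).mp h |>.2)]

lemma Xf_succ (N l k y : ℕ) (hN : 0 < N) (hl : l < 2*N) :
    Xf N k ((l+1) % (2*N)) y = (Xf N k l y + 1) % (2*N) := by
  symm
  apply Xf_unique N k _ y _ hN (Nat.mod_lt _ (by omega))
  rw [Nat.mod_add_mod]
  have : Xf N k l y + 1 + k*y = Xf N k l y + k*y + 1 := by ring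
  rw [this, ← Nat.mod_add_mod, Xf_spec N k l y hN, Nat.mod_add_mod]
  exact (Nat.mod_mod_of_dvd (l+1) dvd_rfl).symm

lemma inP1_succ_iff (N x y : ℕ) (hN : 0 < N) (hx : x < 2*N) (h1 : x ≠ N-1) (h2 : x ≠ 2*N-1) :
    inP1 N ((x+1) % (2*N), y) ↔ inP1 N (x, y) := by
  rw [Nat.mod_eq_of_lt (by omega)]
  simp only [inP1]
  omega

/-- For odd slope `k`, adjacent parallel discrete lines on `(ℤ/2Nℤ)²` (with `N = 2^n`
a power of two) satisfy `|C₁(L^{2N}_{l,k}) − C₁(L^{2N}_{l+1,k})| = 2`, interception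
`l+1` taken mod `2N`. -/
theorem adjacent_lines_quadrant_diff (n : ℕ) (N : ℕ) (hN : N = 2 ^ n)
    (l k : ℕ) (hl : l < 2 * N) (hk : k < 2 * N) (hkodd : Odd k) :
    |(C1 N l k : ℤ) - (C1 N ((l + 1) % (2 * N)) k : ℤ)| = 2 := by
  have hN0 : 0 < N := hN ▸ (Nat.pow_pos (by norm_num : 0 < 2) : 0 < 2 ^ n)
  -- coprimality
  have hco : Nat.Coprime k (2*N) := by
    rw [hN, ← pow_succ']
    exact Nat.Coprime.pow_right _ hkodd.coprime_two_right
  -- injectivity of y ↦ Xf on range (2N)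
  have hinj : ∀ y ∈ Finset.range (2*N), ∀ y' ∈ Finset.range (2*N),
      Xf N k l y = Xf N k l y' → y = y' := by
    intro y hy y' hy' h
    simp only [Finset.mem_range] at hy hy'
    have h1 := Xf_spec N k l y hN0
    have h2 := Xf_spec N k l y' hN0
    rw [h] at h1
    have hm : k*y ≡ k*y' [MOD 2*N] :=
      Nat.ModEq.add_left_cancel' _ (h1.trans h2.symm)
    have := Nat.ModEq.cancel_left_of_coprime hco.symm hm
    rwa [Nat.ModEq, Nat.mod_eq_of_lt hy, Nat.mod_eq_of_lt hy'] at this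
  -- surjectivity
  have himg : (Finset.range (2*N)).image (fun y => Xf N k l y) = Finset.range (2*N) := by
    apply Finset.eq_of_subset_of_card_le
    · intro x hx
      simp only [Finset.mem_image] at hx
      obtain ⟨y, _, rfl⟩ := hx
      exact Finset.mem_range.mpr (Xf_lt N k l y hN0)
    · rw [Finset.card_image_of_injOn hinj]
  obtain ⟨y1, hy1mem, hy1⟩ : ∃ y1 ∈ Finset.range (2*N), Xf N k l y1 = N-1 := by
    have h : N-1 ∈ Finset.range (2*N) := Finset.mem_range.mpr (by omega)
    rw [← himg] at h
    simpa using h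
  have hy1lt : y1 < 2*N := Finset.mem_range.mp hy1mem
  -- k*N ≡ N
  have hkN : (k*N) % (2*N) = N % (2*N) := by
    obtain ⟨t, ht⟩ := hkodd
    have : k*N = N + t*(2*N) := by rw [ht]; ring
    rw [this, Nat.add_mul_mod_self_right]
  -- the partner point
  set y2 := (y1 + N) % (2*N) with hy2def
  have hy2lt : y2 < 2*N := Nat.mod_lt _ (by omega)
  have hy2mem : y2 ∈ Finset.range (2*N) := Finset.mem_range.mpr hy2lt
  have hy2 : Xf N k l y2 = 2*N - 1 := by
    refine (Xf_unique N k l y2 (2*N-1) hN0 (by omega) ?_).symm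
    have e1 : k * y2 ≡ k * (y1 + N) [MOD 2*N] := Nat.ModEq.mul_left k (Nat.mod_modEq _ _)
    have e2 : (2*N-1) + k*y2 ≡ (2*N-1) + (k*y1 + k*N) [MOD 2*N] := by
      rw [Nat.mul_add] at e1
      exact Nat.ModEq.add_left _ e1
    have e3 : (2*N-1) + (k*y1 + k*N) ≡ (2*N-1) + (k*y1 + N) [MOD 2*N] :=
      Nat.ModEq.add_left _ (Nat.ModEq.add_left _ hkN)
    have e4 : (2*N-1) + (k*y1 + N) = (N-1 + k*y1) + 1*(2*N) := by
      have h1 : 0 < N := hN0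
      omega
    calc ((2*N-1) + k*y2) % (2*N)
        = ((2*N-1) + (k*y1 + N)) % (2*N) := e2.trans e3
      _ = ((N-1 + k*y1) + 1*(2*N)) % (2*N) := by rw [e4]
      _ = (N-1 + k*y1) % (2*N) := Nat.add_mul_mod_self_right _ _ _
      _ = l % (2*N) := by rw [← hy1]; exact Xf_spec N k l y1 hN0
  have hne : y1 ≠ y2 := by
    intro h
    rw [h, hy2] at hy1
    omega
  -- exactly one of y1, y2 is below N
  have hhalf : (y1 < N ∧ N ≤ y2) ∨ (N ≤ y1 ∧ y2 < N) := by
    rcases Nat.lt_or_ge y1 N with h | h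
    · left
      refine ⟨h, ?_⟩
      rw [hy2def, Nat.mod_eq_of_lt (by omega)]
      omega
    · right
      refine ⟨h, ?_⟩
      have : (y1 + N) % (2*N) = y1 + N - 2*N := by
        rw [Nat.mod_eq_sub_mod (by omega), Nat.mod_eq_of_lt (by omega)]
      rw [hy2def, this]
      omega
  -- express both C1 values as filtered counts over y
  rw [C1_eq N l k hN0, C1_eq N ((l+1)%(2*N)) k hN0]
  rw [Finset.filter_congr (fun y _ => by
    rw [Xf_succ N l k y hN0 hl] :
    ∀ y ∈ Finset.range (2*N), (inP1 N (Xf N k ((l+1)%(2*N)) y, y)) ↔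
      (inP1 N ((Xf N k l y + 1) % (2*N), y)))]
  -- turn into a single sum
  rw [Finset.card_filter, Finset.card_filter]
  push_cast
  rw [← Finset.sum_sub_distrib]
  have hsub : ({y1, y2} : Finset ℕ) ⊆ Finset.range (2*N) := by
    intro y hy
    simp only [Finset.mem_insert, Finset.mem_singleton] at hy
    rcases hy with rfl | rfl
    · exact hy1mem
    · exact hy2mem
  rw [← Finset.sum_subset hsub (by
    intro y hy hyn
    simp only [Finset.mem_insert, Finset.mem_singleton, not_or] at hyn
    have hylt : y < 2*N := Finset.mem_range.mp hy
    have h1 : Xf N k l y ≠ N-1 := fun h => hyn.1 (hinj y hy y1 hy1mem (h.trans hy1.symm))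
    have h2 : Xf N k l y ≠ 2*N-1 := fun h => hyn.2 (hinj y hy y2 hy2mem (h.trans hy2.symm))
    simp [inP1_succ_iff N _ y hN0 (Xf_lt N k l y hN0) h1 h2])]
  rw [Finset.sum_pair hne]
  have hx1 : (Xf N k l y1 + 1) % (2*N) = N := by
    rw [hy1]
    have : N - 1 + 1 = N := by omega
    rw [this, Nat.mod_eq_of_lt (by omega)]
  have hx2 : (Xf N k l y2 + 1) % (2*N) = 0 := by
    rw [hy2]
    have : 2*N - 1 + 1 = 2*N := by omega
    rw [this, Nat.mod_self]
  rw [hx1, hx2, hy1, hy2]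
  rcases hhalf with ⟨h1, h2⟩ | ⟨h1, h2⟩
  · have p1 : inP1 N (N-1, y1) := by simp only [inP1]; omega
    have q1 : ¬ inP1 N (N, y1) := by simp only [inP1]; omega
    have p2 : inP1 N (2*N-1, y2) := by simp only [inP1]; omega
    have q2 : ¬ inP1 N (0, y2) := by simp only [inP1]; omega
    rw [if_pos p1, if_neg q1, if_pos p2, if_neg q2]
    norm_num
  · have p1 : ¬ inP1 N (N-1, y1) := by simp only [inP1]; omega
    have q1 : inP1 N (N, y1) := by simp only [inP1]; omega
    have p2 : ¬ inP1 N (2*N-1, y2) := by simp only [inP1]; omega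
    have q2 : inP1 N (0, y2) := by simp only [inP1]; omega
    rw [if_neg p1, if_pos q1, if_neg p2, if_pos q2]
    norm_num
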